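/- Let n > 0. If multiplication by n equals repeated addition of n and shoe division by n holds, then sock division by n holds: for any families {X_a}_{a∈A} and {Y_b}_{b∈B} of pairwise disjoint n-element sets, a bijection ⋃_a X_a ≃ ⋃_b Y_b yields a bijection A ≃ B. -/

import Mathlib

/-- Multiplication by `n` equals repeated addition of `n`. -/
def MulEqRepeatedAdd (n : ℕ) : Prop :=
  ∀ (A U : Type) (X : A → Set U), Pairwise (Function.onFun Disjoint X) →
    (∀ a, Nonempty (X a ≃ Fin n)) → Nonempty ((⋃ a, X a) ≃ A × Fin n)

/-- Shoe division by `n`. -/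
def ShoeDivision (n : ℕ) : Prop :=
  ∀ (A B : Type), Nonempty (A × Fin n ≃ B × Fin n) → Nonempty (A ≃ B)

theorem mul_eq_repeated_add_and_shoe_implies_sock (n : ℕ) (hn : 0 < n)
    (hmul : MulEqRepeatedAdd n) (hshoe : ShoeDivision n) :
    ∀ (A B U V : Type) (X : A → Set U) (Y : B → Set V),
      Pairwise (Function.onFun Disjoint X) → Pairwise (Function.onFun Disjoint Y) →
      (∀ a, Nonempty (X a ≃ Fin n)) → (∀ b, Nonempty (Y b ≃ Fin n)) →
      Nonempty ((⋃ a, X a) ≃ (⋃ b, Y b)) → Nonempty (A ≃ B) := by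
  intro A B U V X Y hX hY hXn hYn ⟨e⟩
  obtain ⟨eA⟩ := hmul A U X hX hXn
  obtain ⟨eB⟩ := hmul B V Y hY hYn
  exact hshoe A B ⟨eA.symm.trans (e.trans eB)⟩
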